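/- Let Ω be a compact metric space and τ : Ω → Ω an isometry. If τ has a dense orbit (i.e., there is ω₀ such that {τⁿ(ω₀) : n ∈ ℤ} is dense in Ω), then τ is uniquely ergodic: there is exactly one τ-invariant Borel probability measure on Ω. -/

import Mathlib

open MeasureTheory BoundedContinuousFunction Filter Topology Set
open scoped NNReal ENNReal

set_option linter.unusedSectionVars false
set_option linter.unusedVariables false

noncomputable section

namespace Stmt3Aux

section Basic


variable {Ω : Type*} [MetricSpace Ω]

lemma zpow_apply_add (τ : Ω ≃ᵢ Ω) (m n : ℤ) (x : Ω) :
    (τ ^ (m + n)) x = (τ ^ m) ((τ ^ n) x) := by rw [zpow_add]; rfl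

lemma abs_sum_shift (G : ℤ → ℝ) (C : ℝ) (hG : ∀ k, |G k| ≤ C) (m : ℤ) (N : ℕ) :
    |∑ n ∈ Finset.range N, (G (m + n) - G n)| ≤ 2 * |m| * C := by
  have hC : 0 ≤ C := le_trans (abs_nonneg _) (hG 0)
  induction m using Int.induction_on with
  | zero => simp
  | succ i ih =>
      have key : ∑ n ∈ Finset.range N, (G ((i : ℤ) + 1 + n) - G n)
          = (∑ n ∈ Finset.range N, (G ((i : ℤ) + n) - G n))
            + (∑ n ∈ Finset.range N, (G ((i : ℤ) + (n + 1)) - G ((i : ℤ) + n))) := by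
        rw [← Finset.sum_add_distrib]
        refine Finset.sum_congr rfl fun n _ => ?_
        have h1 : (i : ℤ) + 1 + n = (i : ℤ) + (n + 1) := by ring
        rw [h1]; ring
      have htel : ∑ n ∈ Finset.range N, (G ((i : ℤ) + (n + 1)) - G ((i : ℤ) + n))
          = G ((i : ℤ) + N) - G ((i : ℤ) + 0) := by
        have := Finset.sum_range_sub (fun k : ℕ => G ((i : ℤ) + k)) N
        simpa [add_assoc] using this
      rw [key, htel]
      have h2 : |G ((i : ℤ) + N) - G ((i : ℤ) + 0)| ≤ 2 * C := by
        calc |G ((i : ℤ) + N) - G ((i : ℤ) + 0)| ≤ |G ((i : ℤ) + N)| + |G ((i : ℤ) + 0)| :=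
              abs_sub _ _
          _ ≤ C + C := add_le_add (hG _) (hG _)
          _ = 2 * C := by ring
      have habs1 : |((i : ℤ) + 1)| = (i : ℤ) + 1 := abs_of_nonneg (by positivity)
      have habs0 : |(i : ℤ)| = (i : ℤ) := abs_of_nonneg (by positivity)
      calc |(∑ n ∈ Finset.range N, (G ((i : ℤ) + n) - G n))
            + (G ((i : ℤ) + N) - G ((i : ℤ) + 0))|
          ≤ |∑ n ∈ Finset.range N, (G ((i : ℤ) + n) - G n)|
            + |G ((i : ℤ) + N) - G ((i : ℤ) + 0)| := abs_add_le _ _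
        _ ≤ 2 * |(i : ℤ)| * C + 2 * C := add_le_add ih h2
        _ ≤ 2 * |((i : ℤ) + 1)| * C := by
            rw [habs0, habs1]
            push_cast
            nlinarith
  | pred i ih =>
      have key : ∑ n ∈ Finset.range N, (G (-(i : ℤ) - 1 + n) - G n)
          = (∑ n ∈ Finset.range N, (G (-(i : ℤ) + n) - G n))
            + (∑ n ∈ Finset.range N, (G (-(i : ℤ) - 1 + n) - G (-(i : ℤ) - 1 + (n + 1)))) := by
        rw [← Finset.sum_add_distrib]
        refine Finset.sum_congr rfl fun n _ => ?_
        have h1 : -(i : ℤ) - 1 + (n + 1) = -(i : ℤ) + n := by ring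
        rw [h1]; ring
      have htel : ∑ n ∈ Finset.range N, (G (-(i : ℤ) - 1 + n) - G (-(i : ℤ) - 1 + (n + 1)))
          = -(G (-(i : ℤ) - 1 + N) - G (-(i : ℤ) - 1 + 0)) := by
        have := Finset.sum_range_sub (fun k : ℕ => G (-(i : ℤ) - 1 + k)) N
        have h2 : ∑ n ∈ Finset.range N, (G (-(i : ℤ) - 1 + n) - G (-(i : ℤ) - 1 + (n + 1)))
            = -∑ n ∈ Finset.range N, (G (-(i : ℤ) - 1 + (n + 1)) - G (-(i : ℤ) - 1 + n)) := by
          rw [← Finset.sum_neg_distrib]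
          exact Finset.sum_congr rfl fun n _ => by ring
        rw [h2, neg_inj]
        simpa [add_assoc] using this
      rw [key, htel]
      have h2 : |(-(G (-(i : ℤ) - 1 + N) - G (-(i : ℤ) - 1 + 0)))| ≤ 2 * C := by
        rw [abs_neg]
        calc |G (-(i : ℤ) - 1 + N) - G (-(i : ℤ) - 1 + 0)|
            ≤ |G (-(i : ℤ) - 1 + N)| + |G (-(i : ℤ) - 1 + 0)| := abs_sub _ _
          _ ≤ C + C := add_le_add (hG _) (hG _)
          _ = 2 * C := by ring
      have habs1 : |(-(i : ℤ) - 1)| = (i : ℤ) + 1 := by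
        rw [abs_of_nonpos (by omega)]; ring
      have habs0 : |(-(i : ℤ))| = (i : ℤ) := by
        rw [abs_of_nonpos (by omega)]; ring
      calc |(∑ n ∈ Finset.range N, (G (-(i : ℤ) + n) - G n))
            + -(G (-(i : ℤ) - 1 + N) - G (-(i : ℤ) - 1 + 0))|
          ≤ |∑ n ∈ Finset.range N, (G (-(i : ℤ) + n) - G n)|
            + |(-(G (-(i : ℤ) - 1 + N) - G (-(i : ℤ) - 1 + 0)))| := abs_add_le _ _
        _ ≤ 2 * |(-(i : ℤ))| * C + 2 * C := add_le_add ih h2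
        _ ≤ 2 * |(-(i : ℤ) - 1)| * C := by
            rw [habs0, habs1]
            push_cast
            nlinarith

lemma exists_finite_dense [CompactSpace Ω] (τ : Ω ≃ᵢ Ω) (ω₀ : Ω)
    (hdense : Dense (Set.range fun n : ℤ => (τ ^ n) ω₀)) {δ : ℝ} (hδ : 0 < δ) :
    ∃ M : ℕ, ∀ x : Ω, ∃ n : ℤ, |n| ≤ (M : ℤ) ∧ dist ((τ ^ n) ω₀) x < δ := by
  have hcov : (Set.univ : Set Ω) ⊆ ⋃ n : ℤ, Metric.ball ((τ ^ n) ω₀) δ := by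
    intro x _
    obtain ⟨y, hy, hyd⟩ := hdense.exists_dist_lt x hδ
    obtain ⟨n, rfl⟩ := hy
    exact Set.mem_iUnion.mpr ⟨n, by simpa [Metric.mem_ball, dist_comm] using hyd⟩
  obtain ⟨t, ht⟩ := isCompact_univ.elim_finite_subcover
    (fun n : ℤ => Metric.ball ((τ ^ n) ω₀) δ) (fun _ => Metric.isOpen_ball) hcov
  refine ⟨t.sup fun n => n.natAbs, fun x => ?_⟩
  obtain ⟨n, hnt, hxn⟩ := Set.mem_iUnion₂.mp (ht (Set.mem_univ x))
  refine ⟨n, ?_, by simpa [Metric.mem_ball, dist_comm] using hxn⟩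
  have h1 : n.natAbs ≤ t.sup fun n => n.natAbs := Finset.le_sup hnt
  have h2 : |n| = (n.natAbs : ℤ) := Int.abs_eq_natAbs n
  omega


end Basic

section Dyn


variable {Ω : Type*} [MetricSpace Ω]


lemma osc_bound [CompactSpace Ω] (τ : Ω ≃ᵢ Ω) (ω₀ : Ω)
    (hdense : Dense (Set.range fun n : ℤ => (τ ^ n) ω₀))
    (g : Ω → ℝ) (hg : Continuous g) (C : ℝ) (hC : ∀ x, |g x| ≤ C)
    {ε : ℝ} (hε : 0 < ε) :
    ∃ N : ℕ, 1 ≤ N ∧ ∀ x : Ω,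
      |∑ n ∈ Finset.range N, g ((τ ^ (n : ℤ)) x)
        - ∑ n ∈ Finset.range N, g ((τ ^ (n : ℤ)) ω₀)| ≤ ε * N := by
  have hC0 : 0 ≤ C := le_trans (abs_nonneg _) (hC ω₀)
  obtain ⟨δ, hδ, hδε⟩ := Metric.uniformContinuous_iff.mp
    (CompactSpace.uniformContinuous_of_continuous hg) (ε / 2) (by positivity)
  obtain ⟨M, hM⟩ := exists_finite_dense τ ω₀ hdense hδ
  obtain ⟨N, hN⟩ := exists_nat_gt (max 1 (4 * M * C / ε))
  have hN1 : 1 ≤ N := by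
    have := (le_max_left 1 (4 * M * C / ε)).trans_lt hN
    exact_mod_cast this.le
  have hN1' : (1 : ℝ) ≤ N := by exact_mod_cast hN1
  have hMC : 2 * M * C ≤ ε / 2 * N := by
    have h4 : 4 * M * C / ε < N := (le_max_right _ _).trans_lt hN
    rw [div_lt_iff₀ hε] at h4
    nlinarith
  refine ⟨N, hN1, fun x => ?_⟩
  obtain ⟨m, hm, hmd⟩ := hM x
  set G : ℤ → ℝ := fun k => g ((τ ^ k) ω₀) with hG
  have hGb : ∀ k, |G k| ≤ C := fun k => hC _
  have step1 : |∑ n ∈ Finset.range N, g ((τ ^ (n : ℤ)) x)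
      - ∑ n ∈ Finset.range N, g ((τ ^ (n : ℤ)) ((τ ^ m) ω₀))| ≤ ε / 2 * N := by
    rw [← Finset.sum_sub_distrib]
    calc |∑ n ∈ Finset.range N, (g ((τ ^ (n : ℤ)) x) - g ((τ ^ (n : ℤ)) ((τ ^ m) ω₀)))|
        ≤ ∑ n ∈ Finset.range N, |g ((τ ^ (n : ℤ)) x) - g ((τ ^ (n : ℤ)) ((τ ^ m) ω₀))| :=
          Finset.abs_sum_le_sum_abs _ _
      _ ≤ ∑ _n ∈ Finset.range N, (ε / 2) := by
          refine Finset.sum_le_sum fun n _ => ?_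
          have hd : dist ((τ ^ (n : ℤ)) x) ((τ ^ (n : ℤ)) ((τ ^ m) ω₀)) < δ := by
            rw [(τ ^ (n : ℤ)).isometry.dist_eq]
            rwa [dist_comm]
          have := hδε hd
          rw [Real.dist_eq] at this
          exact this.le
      _ = ε / 2 * N := by simp [Finset.sum_const, mul_comm]
  have step2 : |∑ n ∈ Finset.range N, g ((τ ^ (n : ℤ)) ((τ ^ m) ω₀))
      - ∑ n ∈ Finset.range N, g ((τ ^ (n : ℤ)) ω₀)| ≤ ε / 2 * N := by
    have hrw : ∀ n : ℕ, g ((τ ^ (n : ℤ)) ((τ ^ m) ω₀)) = G (m + n) := by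
      intro n
      rw [hG]
      simp only
      rw [show (m + n : ℤ) = (n : ℤ) + m by ring, zpow_apply_add τ n m]
    calc |∑ n ∈ Finset.range N, g ((τ ^ (n : ℤ)) ((τ ^ m) ω₀))
        - ∑ n ∈ Finset.range N, g ((τ ^ (n : ℤ)) ω₀)|
        = |∑ n ∈ Finset.range N, (G (m + n) - G n)| := by
          rw [← Finset.sum_sub_distrib]
          congr 1
          exact Finset.sum_congr rfl fun n _ => by rw [hrw n]
      _ ≤ 2 * |m| * C := abs_sum_shift G C hGb m N
      _ ≤ 2 * M * C := by
          have : |m| ≤ (M : ℤ) := hm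
          have h1 : (|m| : ℝ) ≤ (M : ℝ) := by exact_mod_cast this
          have h2 : ((|m| : ℤ) : ℝ) = |(m : ℝ)| := by push_cast; rfl
          nlinarith [abs_nonneg (m : ℝ), h2 ▸ h1]
      _ ≤ ε / 2 * N := hMC
  calc |∑ n ∈ Finset.range N, g ((τ ^ (n : ℤ)) x) - ∑ n ∈ Finset.range N, g ((τ ^ (n : ℤ)) ω₀)|
      ≤ |∑ n ∈ Finset.range N, g ((τ ^ (n : ℤ)) x)
          - ∑ n ∈ Finset.range N, g ((τ ^ (n : ℤ)) ((τ ^ m) ω₀))|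
        + |∑ n ∈ Finset.range N, g ((τ ^ (n : ℤ)) ((τ ^ m) ω₀))
          - ∑ n ∈ Finset.range N, g ((τ ^ (n : ℤ)) ω₀)| := abs_sub_le _ _ _
    _ ≤ ε / 2 * N + ε / 2 * N := add_le_add step1 step2
    _ = ε * N := by ring

variable [MeasurableSpace Ω] [BorelSpace Ω]

lemma measurePreserving_zpow (τ : Ω ≃ᵢ Ω) (μ : Measure Ω)
    (hinv : ∀ E : Set Ω, MeasurableSet E → μ (τ ⁻¹' E) = μ E) (n : ℤ) :
    MeasurePreserving (⇑(τ ^ n)) μ μ := by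
  have h1 : MeasurePreserving (⇑τ) μ μ := by
    refine ⟨τ.continuous.measurable, ?_⟩
    ext E hE
    rw [Measure.map_apply τ.continuous.measurable hE, hinv E hE]
  have hnat : ∀ k : ℕ, MeasurePreserving (⇑(τ ^ (k : ℤ))) μ μ := by
    intro k
    induction k with
    | zero => simpa using MeasurePreserving.id μ
    | succ k ih =>
        have hfun : ⇑(τ ^ ((k : ℕ) + 1 : ℤ)) = ⇑(τ ^ (k : ℤ)) ∘ ⇑τ := by
          funext x
          have := zpow_apply_add τ k 1 x
          simpa [zpow_one] using this
        have : ((k + 1 : ℕ) : ℤ) = ((k : ℕ) + 1 : ℤ) := by push_cast; ring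
        rw [this, hfun]
        exact ih.comp h1
  obtain ⟨k, rfl | rfl⟩ := Int.eq_nat_or_neg n
  · exact hnat k
  · set E : Ω ≃ᵐ Ω := (τ ^ (k : ℤ)).toHomeomorph.toMeasurableEquiv with hE
    have hEmp : MeasurePreserving (⇑E) μ μ := hnat k
    have hfun : ⇑(τ ^ (-(k : ℤ))) = ⇑E.symm := by
      funext x
      apply E.injective
      show (τ ^ (k : ℤ)) ((τ ^ (-(k : ℤ))) x) = E (E.symm x)
      rw [E.apply_symm_apply, ← zpow_apply_add]
      simp
    rw [hfun]
    exact hEmp.symm E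


end Dyn

section Unique


variable {Ω : Type*} [MetricSpace Ω] [CompactSpace Ω] [MeasurableSpace Ω] [BorelSpace Ω]

lemma integral_avg_close (τ : Ω ≃ᵢ Ω) (ω₀ : Ω) (g : Ω →ᵇ ℝ)
    (μ : Measure Ω) (hμp : IsProbabilityMeasure μ)
    (hμ : ∀ E : Set Ω, MeasurableSet E → μ (τ ⁻¹' E) = μ E)
    {ε : ℝ} (hε : 0 < ε) (N : ℕ) (hN1 : 1 ≤ N)
    (hosc : ∀ x : Ω, |∑ n ∈ Finset.range N, g ((τ ^ (n : ℤ)) x)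
        - ∑ n ∈ Finset.range N, g ((τ ^ (n : ℤ)) ω₀)| ≤ ε * N) :
    |∫ x, g x ∂μ - (∑ n ∈ Finset.range N, g ((τ ^ (n : ℤ)) ω₀)) / N| ≤ ε := by
  have hNpos : (0 : ℝ) < N := by exact_mod_cast hN1
  have hint : ∀ n : ℤ, Integrable (fun x => g ((τ ^ n) x)) μ := by
    intro n
    exact (BoundedContinuousFunction.mkOfCompact
      ⟨fun x => g ((τ ^ n) x), g.continuous.comp (τ ^ n).continuous⟩).integrable μ
  have hSint : ∫ x, (∑ n ∈ Finset.range N, g ((τ ^ (n : ℤ)) x)) ∂μ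
      = N * ∫ x, g x ∂μ := by
    have hfs := integral_finset_sum (μ := μ) (Finset.range N)
      (f := fun (n : ℕ) (x : Ω) => g ((τ ^ (n : ℤ)) x)) (fun n _ => hint n)
    rw [hfs]
    have heach : ∀ n : ℕ, ∫ x, g ((τ ^ (n : ℤ)) x) ∂μ = ∫ x, g x ∂μ := by
      intro n
      exact (measurePreserving_zpow τ μ hμ n).integral_comp'
        (f := (τ ^ (n : ℤ)).toHomeomorph.toMeasurableEquiv) _
    rw [Finset.sum_congr rfl fun n _ => heach n]
    simp [Finset.sum_const, mul_comm]
  have hSconst : Integrable (fun x => ∑ n ∈ Finset.range N, g ((τ ^ (n : ℤ)) x)) μ :=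
    integrable_finset_sum _ fun n _ => hint n
  have hdiff : ∫ x, (∑ n ∈ Finset.range N, g ((τ ^ (n : ℤ)) x)
      - ∑ n ∈ Finset.range N, g ((τ ^ (n : ℤ)) ω₀)) ∂μ
      = N * ∫ x, g x ∂μ - ∑ n ∈ Finset.range N, g ((τ ^ (n : ℤ)) ω₀) := by
    rw [integral_sub hSconst (integrable_const _), hSint, integral_const]
    simp [hμp.measure_univ]
  have hbound : |N * ∫ x, g x ∂μ - ∑ n ∈ Finset.range N, g ((τ ^ (n : ℤ)) ω₀)| ≤ ε * N := by
    rw [← hdiff]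
    have := norm_integral_le_of_norm_le_const (μ := μ)
      (f := fun x => ∑ n ∈ Finset.range N, g ((τ ^ (n : ℤ)) x)
        - ∑ n ∈ Finset.range N, g ((τ ^ (n : ℤ)) ω₀))
      (C := ε * N) (Filter.Eventually.of_forall fun x => by
        rw [Real.norm_eq_abs]; exact hosc x)
    simpa [hμp.measure_univ, Real.norm_eq_abs] using this
  have key : ∫ x, g x ∂μ - (∑ n ∈ Finset.range N, g ((τ ^ (n : ℤ)) ω₀)) / N
      = (N * ∫ x, g x ∂μ - ∑ n ∈ Finset.range N, g ((τ ^ (n : ℤ)) ω₀)) / N := by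
    field_simp
  rw [key, abs_div, abs_of_pos hNpos]
  rw [div_le_iff₀ hNpos]
  exact hbound

lemma unique_aux (τ : Ω ≃ᵢ Ω) (ω₀ : Ω)
    (hdense : Dense (Set.range fun n : ℤ => (τ ^ n) ω₀))
    (μ ν : Measure Ω) (hμp : IsProbabilityMeasure μ) (hνp : IsProbabilityMeasure ν)
    (hμ : ∀ E : Set Ω, MeasurableSet E → μ (τ ⁻¹' E) = μ E)
    (hν : ∀ E : Set Ω, MeasurableSet E → ν (τ ⁻¹' E) = ν E) : μ = ν := by
  have main : ∀ g : Ω →ᵇ ℝ, ∫ x, g x ∂μ = ∫ x, g x ∂ν := by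
    intro g
    have habs : ∀ ε : ℝ, 0 < ε → |∫ x, g x ∂μ - ∫ x, g x ∂ν| ≤ 2 * ε := by
      intro ε hε
      obtain ⟨N, hN1, hosc⟩ := osc_bound τ ω₀ hdense g g.continuous ‖g‖
        (fun x => by rw [← Real.norm_eq_abs]; exact g.norm_coe_le_norm x) hε
      have h1 := integral_avg_close τ ω₀ g μ hμp hμ hε N hN1 hosc
      have h2 := integral_avg_close τ ω₀ g ν hνp hν hε N hN1 hosc
      calc |∫ x, g x ∂μ - ∫ x, g x ∂ν|
          ≤ |∫ x, g x ∂μ - (∑ n ∈ Finset.range N, g ((τ ^ (n : ℤ)) ω₀)) / N|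
            + |(∑ n ∈ Finset.range N, g ((τ ^ (n : ℤ)) ω₀)) / N - ∫ x, g x ∂ν| := abs_sub_le _ _ _
        _ ≤ ε + ε := add_le_add h1 (by rwa [abs_sub_comm])
        _ = 2 * ε := by ring
    have : |∫ x, g x ∂μ - ∫ x, g x ∂ν| ≤ 0 := by
      refine le_of_forall_pos_le_add fun ε hε => ?_
      have := habs (ε / 2) (by positivity)
      linarith
    have := le_antisymm this (abs_nonneg _)
    rwa [abs_eq_zero, sub_eq_zero] at this
  haveI := hμp; haveI := hνp
  apply ext_of_forall_lintegral_eq_of_IsFiniteMeasure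
  intro f
  have hcont : Continuous fun x => ((f x : ℝ)) := NNReal.continuous_coe.comp f.continuous
  have hint : Integrable (fun x => ((f x : ℝ))) μ :=
    (BoundedContinuousFunction.mkOfCompact ⟨fun x => ((f x : ℝ)), hcont⟩).integrable μ
  have hint' : Integrable (fun x => ((f x : ℝ))) ν :=
    (BoundedContinuousFunction.mkOfCompact ⟨fun x => ((f x : ℝ)), hcont⟩).integrable ν
  rw [lintegral_coe_eq_integral _ hint, lintegral_coe_eq_integral _ hint']
  congr 1
  exact main (BoundedContinuousFunction.mkOfCompact ⟨fun x => ((f x : ℝ)), hcont⟩)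


end Unique

section Funct


variable {Ω : Type*} [MetricSpace Ω] [CompactSpace Ω]

/-- Birkhoff averages of `h` along the forward orbit of `ω₀`. -/
noncomputable def aseq (τ : Ω ≃ᵢ Ω) (ω₀ : Ω) (h : Ω →ᵇ ℝ) (N : ℕ) : ℝ :=
  (∑ n ∈ Finset.range N, h ((τ ^ (n : ℤ)) ω₀)) / N

lemma aseq_abs_le (τ : Ω ≃ᵢ Ω) (ω₀ : Ω) (h : Ω →ᵇ ℝ) (N : ℕ) :
    |aseq τ ω₀ h N| ≤ ‖h‖ := by
  rcases Nat.eq_zero_or_pos N with rfl | hN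
  · simp [aseq]
  · have hNpos : (0 : ℝ) < N := by exact_mod_cast hN
    rw [aseq, abs_div, abs_of_pos hNpos, div_le_iff₀ hNpos]
    calc |∑ n ∈ Finset.range N, h ((τ ^ (n : ℤ)) ω₀)|
        ≤ ∑ n ∈ Finset.range N, |h ((τ ^ (n : ℤ)) ω₀)| := Finset.abs_sum_le_sum_abs _ _
      _ ≤ ∑ _n ∈ Finset.range N, ‖h‖ := Finset.sum_le_sum fun n _ => by
          rw [← Real.norm_eq_abs]; exact h.norm_coe_le_norm _
      _ = ‖h‖ * N := by simp [Finset.sum_const, mul_comm]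

/-- The limit of Birkhoff averages along a fixed ultrafilter extending `atTop`. -/
noncomputable def Lam (τ : Ω ≃ᵢ Ω) (ω₀ : Ω) (h : Ω →ᵇ ℝ) : ℝ :=
  limUnder (Ultrafilter.of (atTop : Filter ℕ)) (aseq τ ω₀ h)

lemma Lam_spec (τ : Ω ≃ᵢ Ω) (ω₀ : Ω) (h : Ω →ᵇ ℝ) :
    Tendsto (aseq τ ω₀ h) (Ultrafilter.of (atTop : Filter ℕ)) (𝓝 (Lam τ ω₀ h)) := by
  apply tendsto_nhds_limUnder
  have hmem : ∀ N, aseq τ ω₀ h N ∈ Set.Icc (-‖h‖) ‖h‖ := fun N =>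
    abs_le.mp (aseq_abs_le τ ω₀ h N)
  have hle : ↑((Ultrafilter.of (atTop : Filter ℕ)).map (aseq τ ω₀ h))
      ≤ Filter.principal (Set.Icc (-‖h‖) ‖h‖) := by
    rw [Ultrafilter.coe_map, Filter.le_principal_iff, Filter.mem_map]
    exact Filter.univ_mem' hmem
  obtain ⟨c, _, hc⟩ := isCompact_Icc.ultrafilter_le_nhds
    ((Ultrafilter.of (atTop : Filter ℕ)).map (aseq τ ω₀ h)) hle
  exact ⟨c, hc⟩

lemma Lam_unique (τ : Ω ≃ᵢ Ω) (ω₀ : Ω) {h : Ω →ᵇ ℝ} {c : ℝ}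
    (hc : Tendsto (aseq τ ω₀ h) (Ultrafilter.of (atTop : Filter ℕ)) (𝓝 c)) :
    Lam τ ω₀ h = c :=
  tendsto_nhds_unique (Lam_spec τ ω₀ h) hc

lemma Lam_add (τ : Ω ≃ᵢ Ω) (ω₀ : Ω) (h₁ h₂ : Ω →ᵇ ℝ) :
    Lam τ ω₀ (h₁ + h₂) = Lam τ ω₀ h₁ + Lam τ ω₀ h₂ := by
  apply Lam_unique
  have : aseq τ ω₀ (h₁ + h₂) = fun N => aseq τ ω₀ h₁ N + aseq τ ω₀ h₂ N := by
    funext N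
    simp only [aseq, BoundedContinuousFunction.coe_add, Pi.add_apply]
    rw [Finset.sum_add_distrib, add_div]
  rw [this]
  exact (Lam_spec τ ω₀ h₁).add (Lam_spec τ ω₀ h₂)

lemma Lam_smul (τ : Ω ≃ᵢ Ω) (ω₀ : Ω) (c : ℝ) (h : Ω →ᵇ ℝ) :
    Lam τ ω₀ (c • h) = c * Lam τ ω₀ h := by
  apply Lam_unique
  have : aseq τ ω₀ (c • h) = fun N => c * aseq τ ω₀ h N := by
    funext N
    simp only [aseq, BoundedContinuousFunction.coe_smul, Pi.smul_apply, smul_eq_mul]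
    rw [← Finset.mul_sum, mul_div_assoc]
  rw [this]
  exact (Lam_spec τ ω₀ h).const_mul c

lemma Lam_nonneg (τ : Ω ≃ᵢ Ω) (ω₀ : Ω) {h : Ω →ᵇ ℝ} (hh : ∀ x, 0 ≤ h x) :
    0 ≤ Lam τ ω₀ h := by
  refine ge_of_tendsto (Lam_spec τ ω₀ h) (Filter.Eventually.of_forall fun N => ?_)
  unfold aseq
  exact div_nonneg (Finset.sum_nonneg fun n _ => hh _) (by positivity)

lemma Lam_mono (τ : Ω ≃ᵢ Ω) (ω₀ : Ω) {h₁ h₂ : Ω →ᵇ ℝ} (hh : ∀ x, h₁ x ≤ h₂ x) :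
    Lam τ ω₀ h₁ ≤ Lam τ ω₀ h₂ := by
  refine le_of_tendsto_of_tendsto' (Lam_spec τ ω₀ h₁) (Lam_spec τ ω₀ h₂) fun N => ?_
  unfold aseq
  rw [div_eq_mul_inv, div_eq_mul_inv]
  apply mul_le_mul_of_nonneg_right _ (by positivity)
  exact Finset.sum_le_sum fun n _ => hh _

lemma Lam_one (τ : Ω ≃ᵢ Ω) (ω₀ : Ω) : Lam τ ω₀ 1 = 1 := by
  apply Lam_unique
  have hev : ∀ᶠ N in (Ultrafilter.of (atTop : Filter ℕ) : Filter ℕ), aseq τ ω₀ 1 N = 1 := by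
    apply Filter.Eventually.filter_mono (Ultrafilter.of_le _)
    filter_upwards [Filter.eventually_ge_atTop 1] with N hN
    have hNpos : (N : ℝ) ≠ 0 := by positivity
    simp [aseq, hNpos]
  rw [tendsto_congr' hev]
  exact tendsto_const_nhds

lemma Lam_comp_tau (τ : Ω ≃ᵢ Ω) (ω₀ : Ω) (h h' : Ω →ᵇ ℝ) (hh : ∀ x, h' x = h (τ x)) :
    Lam τ ω₀ h' = Lam τ ω₀ h := by
  apply Lam_unique
  set H : ℕ → ℝ := fun k => h ((τ ^ (k : ℤ)) ω₀) with hH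
  have hdiff : Tendsto (fun N => aseq τ ω₀ h' N - aseq τ ω₀ h N) atTop (𝓝 0) := by
    refine squeeze_zero_norm (fun N => ?_) (tendsto_const_div_atTop_nhds_zero_nat (2 * ‖h‖))
    · 
      have hterm : ∀ n : ℕ, h' ((τ ^ (n : ℤ)) ω₀) = H (n + 1) := by
        intro n
        rw [hh, hH]
        simp only
        have : ((n + 1 : ℕ) : ℤ) = (1 : ℤ) + (n : ℤ) := by push_cast; ring
        rw [this, zpow_apply_add τ 1 n ω₀, zpow_one]
      have hnum : ∑ n ∈ Finset.range N, h' ((τ ^ (n : ℤ)) ω₀)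
          - ∑ n ∈ Finset.range N, h ((τ ^ (n : ℤ)) ω₀) = H N - H 0 := by
        rw [Finset.sum_congr rfl fun n _ => hterm n, ← Finset.sum_sub_distrib]
        exact Finset.sum_range_sub H N
      have : aseq τ ω₀ h' N - aseq τ ω₀ h N = (H N - H 0) / N := by
        rw [aseq, aseq, div_sub_div_same, hnum]
      rw [this, Real.norm_eq_abs, abs_div]
      rcases Nat.eq_zero_or_pos N with rfl | hN
      · simp
      · have hNpos : (0 : ℝ) < N := by exact_mod_cast hN
        rw [abs_of_pos hNpos, div_le_div_iff₀ hNpos hNpos]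
        have h1 : |H N - H 0| ≤ 2 * ‖h‖ := by
          calc |H N - H 0| ≤ |H N| + |H 0| := abs_sub _ _
            _ ≤ ‖h‖ + ‖h‖ := add_le_add
                (by rw [← Real.norm_eq_abs]; exact h.norm_coe_le_norm _)
                (by rw [← Real.norm_eq_abs]; exact h.norm_coe_le_norm _)
            _ = 2 * ‖h‖ := by ring
        nlinarith
  have hdiff' : Tendsto (fun N => aseq τ ω₀ h' N - aseq τ ω₀ h N)
      (Ultrafilter.of (atTop : Filter ℕ)) (𝓝 0) :=
    hdiff.mono_left (Ultrafilter.of_le _)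
  have : Tendsto (aseq τ ω₀ h') (Ultrafilter.of (atTop : Filter ℕ)) (𝓝 (0 + Lam τ ω₀ h)) := by
    have := hdiff'.add (Lam_spec τ ω₀ h)
    simpa using this
  simpa using this


end Funct

section Content


variable {Ω : Type*} [MetricSpace Ω] [CompactSpace Ω]

/-- Real-valued version of an `ℝ≥0`-valued bounded continuous function. -/
noncomputable def toRealB (f : Ω →ᵇ ℝ≥0) : Ω →ᵇ ℝ :=
  BoundedContinuousFunction.mkOfCompact ⟨fun x => (f x : ℝ), NNReal.continuous_coe.comp f.continuous⟩

@[simp] lemma toRealB_apply (f : Ω →ᵇ ℝ≥0) (x : Ω) : toRealB f x = (f x : ℝ) := rfl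

/-- The invariant positive linear functional on `Ω →ᵇ ℝ≥0`. -/
noncomputable def Lnn (τ : Ω ≃ᵢ Ω) (ω₀ : Ω) : (Ω →ᵇ ℝ≥0) →ₗ[ℝ≥0] ℝ≥0 where
  toFun f := Real.toNNReal (Lam τ ω₀ (toRealB f))
  map_add' f g := by
    have h1 : toRealB (f + g) = toRealB f + toRealB g := by
      ext x; simp
    rw [h1, Lam_add]
    exact Real.toNNReal_add (Lam_nonneg τ ω₀ fun x => (f x).coe_nonneg)
      (Lam_nonneg τ ω₀ fun x => (g x).coe_nonneg)
  map_smul' c f := by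
    have h1 : toRealB (c • f) = (c : ℝ) • toRealB f := by
      ext x
      simp [NNReal.smul_def]
    rw [h1, Lam_smul]
    simp only [RingHom.id_apply, smul_eq_mul]
    rw [Real.toNNReal_mul c.coe_nonneg, Real.toNNReal_coe]

lemma Lnn_apply (τ : Ω ≃ᵢ Ω) (ω₀ : Ω) (f : Ω →ᵇ ℝ≥0) :
    Lnn τ ω₀ f = Real.toNNReal (Lam τ ω₀ (toRealB f)) := rfl

lemma Lnn_one (τ : Ω ≃ᵢ Ω) (ω₀ : Ω) : Lnn τ ω₀ 1 = 1 := by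
  rw [Lnn_apply]
  have h1 : toRealB (1 : Ω →ᵇ ℝ≥0) = 1 := by ext x; simp
  rw [h1, Lam_one]
  simp

lemma Lnn_mono (τ : Ω ≃ᵢ Ω) (ω₀ : Ω) {f g : Ω →ᵇ ℝ≥0} (h : ∀ x, f x ≤ g x) :
    Lnn τ ω₀ f ≤ Lnn τ ω₀ g := by
  rw [Lnn_apply, Lnn_apply]
  exact Real.toNNReal_mono (Lam_mono τ ω₀ fun x => by exact_mod_cast h x)

lemma Lnn_comp_tau (τ : Ω ≃ᵢ Ω) (ω₀ : Ω) (f f' : Ω →ᵇ ℝ≥0) (hff : ∀ x, f' x = f (τ x)) :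
    Lnn τ ω₀ f' = Lnn τ ω₀ f := by
  rw [Lnn_apply, Lnn_apply, Lam_comp_tau τ ω₀ (toRealB f) (toRealB f')
    (fun x => by simp [hff x])]

/-- Compactly supported maps as bounded continuous maps. -/
noncomputable def ccToB : CompactlySupportedContinuousMap Ω ℝ≥0 →ₗ[ℝ≥0] (Ω →ᵇ ℝ≥0) where
  toFun f := BoundedContinuousFunction.mkOfCompact f.toContinuousMap
  map_add' f g := by ext x; rfl
  map_smul' c f := by ext x; rfl

@[simp] lemma ccToB_apply (f : CompactlySupportedContinuousMap Ω ℝ≥0) (x : Ω) :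
    ccToB f x = f x := rfl

/-- Bounded continuous maps as compactly supported maps. -/
noncomputable def bToCc (f : Ω →ᵇ ℝ≥0) : CompactlySupportedContinuousMap Ω ℝ≥0 :=
  CompactlySupportedContinuousMap.continuousMapEquiv f.toContinuousMap

/-- The functional on compactly supported maps. -/
noncomputable def LnnC (τ : Ω ≃ᵢ Ω) (ω₀ : Ω) :
    CompactlySupportedContinuousMap Ω ℝ≥0 →ₗ[ℝ≥0] ℝ≥0 :=
  (Lnn τ ω₀).comp ccToB

/-- The Riesz content associated to the invariant functional. -/
noncomputable def cont (τ : Ω ≃ᵢ Ω) (ω₀ : Ω) : Content Ω where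
  toFun := rieszContentAux (LnnC τ ω₀)
  mono' := fun _ _ h => rieszContentAux_mono (LnnC τ ω₀) h
  sup_le' := fun K₁ K₂ => rieszContentAux_sup_le (LnnC τ ω₀) K₁ K₂
  sup_disjoint' := by
    intro K₁ K₂ hdisj hc₁ hc₂
    refine le_antisymm ?_ (rieszContentAux_sup_le (LnnC τ ω₀) K₁ K₂) |>.symm
    apply _root_.le_of_forall_pos_le_add
    intro ε hε
    obtain ⟨f, hf, hfΛ⟩ := exists_lt_rieszContentAux_add_pos (LnnC τ ω₀) (K₁ ⊔ K₂) hε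
    obtain ⟨u, hu0, hu1, hu01⟩ := exists_continuous_zero_one_of_isClosed hc₁ hc₂ hdisj
    set f₁ : Ω →ᵇ ℝ≥0 := BoundedContinuousFunction.mkOfCompact
      ⟨fun x => f x * Real.toNNReal (1 - u x),
        f.continuous.mul (continuous_real_toNNReal.comp (continuous_const.sub u.continuous))⟩
      with hf₁
    set f₂ : Ω →ᵇ ℝ≥0 := BoundedContinuousFunction.mkOfCompact
      ⟨fun x => f x * Real.toNNReal (u x),
        f.continuous.mul (continuous_real_toNNReal.comp u.continuous)⟩ with hf₂
    have happly₁ : ∀ x, f₁ x = f x * Real.toNNReal (1 - u x) := fun x => rfl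
    have happly₂ : ∀ x, f₂ x = f x * Real.toNNReal (u x) := fun x => rfl
    have hsum : f₁ + f₂ = ccToB f := by
      ext x
      have h01 := hu01 x
      simp only [BoundedContinuousFunction.coe_add, Pi.add_apply, happly₁, happly₂]
      rw [← mul_add, ← Real.toNNReal_add (by linarith [h01.2]) h01.1]
      norm_num
    have h1 : ∀ x ∈ K₁, 1 ≤ f₁ x := by
      intro x hx
      have hux : u x = 0 := hu0 hx
      rw [happly₁, hux]
      norm_num
      exact hf x (SetLike.le_def.mp le_sup_left hx)
    have h2 : ∀ x ∈ K₂, 1 ≤ f₂ x := by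
      intro x hx
      have hux : u x = 1 := hu1 hx
      rw [happly₂, hux]
      norm_num
      exact hf x (SetLike.le_def.mp le_sup_right hx)
    calc rieszContentAux (LnnC τ ω₀) K₁ + rieszContentAux (LnnC τ ω₀) K₂
        ≤ Lnn τ ω₀ f₁ + Lnn τ ω₀ f₂ :=
          add_le_add (rieszContentAux_le (LnnC τ ω₀) (f := bToCc f₁) h1)
            (rieszContentAux_le (LnnC τ ω₀) (f := bToCc f₂) h2)
      _ = Lnn τ ω₀ (f₁ + f₂) := (map_add (Lnn τ ω₀) f₁ f₂).symm
      _ = Lnn τ ω₀ (ccToB f) := by rw [hsum]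
      _ ≤ rieszContentAux (LnnC τ ω₀) (K₁ ⊔ K₂) + ε := hfΛ.le


/-- unfolding lemma -/
lemma cont_eq (τ : Ω ≃ᵢ Ω) (ω₀ : Ω) (K : TopologicalSpace.Compacts Ω) :
    cont τ ω₀ K = rieszContentAux (LnnC τ ω₀) K := rfl


variable {Ω : Type*} [MetricSpace Ω] [CompactSpace Ω]

lemma riesz_univ (τ : Ω ≃ᵢ Ω) (ω₀ : Ω) :
    rieszContentAux (LnnC τ ω₀) ⟨Set.univ, isCompact_univ⟩ = 1 := by
  apply le_antisymm
  · have h1 : ∀ x ∈ (⟨Set.univ, isCompact_univ⟩ : TopologicalSpace.Compacts Ω),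
        (1 : ℝ≥0) ≤ (1 : Ω →ᵇ ℝ≥0) x := fun x _ => by simp
    have := rieszContentAux_le (LnnC τ ω₀) (f := bToCc 1) h1
    rwa [show LnnC τ ω₀ (bToCc 1) = Lnn τ ω₀ 1 from rfl, Lnn_one] at this
  · apply le_csInf (rieszContentAux_image_nonempty (LnnC τ ω₀) _)
    rintro b ⟨g, hg, rfl⟩
    have : (1 : ℝ≥0) = Lnn τ ω₀ 1 := (Lnn_one τ ω₀).symm
    rw [this]
    exact Lnn_mono τ ω₀ (g := ccToB g) fun x => by
      simpa using hg x (Set.mem_univ x)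

lemma riesz_map_tau (τ : Ω ≃ᵢ Ω) (ω₀ : Ω) (K : TopologicalSpace.Compacts Ω) :
    rieszContentAux (LnnC τ ω₀) (K.map ⇑τ.toHomeomorph τ.toHomeomorph.continuous)
      = rieszContentAux (LnnC τ ω₀) K := by
  unfold rieszContentAux
  congr 1
  ext b
  constructor
  · rintro ⟨f, hf, rfl⟩
    refine ⟨CompactlySupportedContinuousMap.continuousMapEquiv
      ⟨fun x => f (τ x), f.continuous.comp τ.continuous⟩, fun x hx => ?_, ?_⟩
    · exact hf (τ x) ⟨x, hx, rfl⟩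
    · exact Lnn_comp_tau τ ω₀ (ccToB f) (ccToB _) fun x => rfl
  · rintro ⟨g, hg, rfl⟩
    refine ⟨CompactlySupportedContinuousMap.continuousMapEquiv
      ⟨fun x => g (τ.symm x), g.continuous.comp τ.symm.continuous⟩, fun x hx => ?_, ?_⟩
    · obtain ⟨y, hy, rfl⟩ := hx
      have : τ.symm (τ.toHomeomorph y) = y := τ.symm_apply_apply y
      show (1 : ℝ≥0) ≤ g (τ.symm (τ.toHomeomorph y))
      simpa [this] using hg y hy
    · exact (Lnn_comp_tau τ ω₀ (ccToB (CompactlySupportedContinuousMap.continuousMapEquiv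
        ⟨fun x => g (τ.symm x), g.continuous.comp τ.symm.continuous⟩)) (ccToB g)
        fun x => by show g x = g (τ.symm (τ x)); simp).symm

variable [MeasurableSpace Ω] [BorelSpace Ω]

lemma exists_invariant (τ : Ω ≃ᵢ Ω) (ω₀ : Ω) :
    ∃ μ : Measure Ω, IsProbabilityMeasure μ ∧
      ∀ E : Set Ω, MeasurableSet E → μ (τ ⁻¹' E) = μ E := by
  refine ⟨(cont τ ω₀).measure, ?_, ?_⟩
  · constructor
    rw [Content.measure_apply _ MeasurableSet.univ]
    have h1 : (cont τ ω₀).outerMeasure Set.univ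
        = (cont τ ω₀).innerContent ⟨Set.univ, isOpen_univ⟩ := by
      have := (cont τ ω₀).outerMeasure_of_isOpen Set.univ isOpen_univ
      exact this
    rw [h1, (cont τ ω₀).innerContent_of_isCompact isCompact_univ isOpen_univ]
    rw [cont_eq, riesz_univ]
    rfl
  · intro E hE
    rw [Content.measure_apply _ (hE.preimage τ.continuous.measurable),
      Content.measure_apply _ hE]
    have := (cont τ ω₀).outerMeasure_preimage τ.toHomeomorph
      (fun K => by rw [cont_eq, cont_eq, riesz_map_tau]) E
    exact this


end Content

end Stmt3Aux

end

open MeasureTheory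

/-- An isometry of a compact metric space with a dense (two-sided) orbit is uniquely
ergodic: there is exactly one invariant Borel probability measure. -/
theorem stmt_3 {Ω : Type*} [MetricSpace Ω] [CompactSpace Ω]
    [MeasurableSpace Ω] [BorelSpace Ω]
    (τ : Ω ≃ᵢ Ω) (ω₀ : Ω) (hdense : Dense (Set.range fun n : ℤ => (τ ^ n) ω₀)) :
    ∃! μ : Measure Ω, IsProbabilityMeasure μ ∧
      ∀ E : Set Ω, MeasurableSet E → μ (τ ⁻¹' E) = μ E := by
  obtain ⟨μ, hμp, hμinv⟩ := Stmt3Aux.exists_invariant τ ω₀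
  refine ⟨μ, ⟨hμp, hμinv⟩, ?_⟩
  rintro ν ⟨hνp, hνinv⟩
  exact Stmt3Aux.unique_aux τ ω₀ hdense ν μ hνp hμp hνinv hμinv
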